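/- Let k be a field and Γ₋ the category of finite nonempty sets with surjective maps as morphisms. In the functor category A = Fun(Γ₋^op, Vect_k), let s₂ be the functor sending a finite set X to the free k-module on the set of surjections X ↠ {0,1} (with functoriality by precomposition), let s₁ be the constant functor k, let η : s₂ → s₁ send each basis surjection to 1 ∈ k, and let t₁ be the functor with t₁(X) = k when X is a singleton and t₁(X) = 0 otherwise. Set P_i = s₂^{⊗i} (pointwise tensor power, with P₀ = s₁) and d_i = Σ_{j=1}^{i} (−1)^j id^{⊗(j−1)} ⊗ η ⊗ id^{⊗(i−j)} : P_i → P_{i−1}. Then d_{i} ∘ d_{i+1} = 0, each P_i is a projective object of A, the cokernel of d₁ : P₁ → P₀ is isomorphic to t₁, and the complex (P_•, d) is exact in positive degrees; i.e., P_• is a projective resolution of t₁ in A. -/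

import Mathlib

open CategoryTheory CategoryTheory.Limits

noncomputable section

/-- The category `Γ₋` of finite nonempty sets, with surjective maps as morphisms. -/
structure GammaMinus : Type 1 where
  carrier : Type
  [nonempty : Nonempty carrier]
  [finite : Finite carrier]

attribute [instance] GammaMinus.nonempty GammaMinus.finite

instance : Category GammaMinus where
  Hom X Y := {f : X.carrier → Y.carrier // Function.Surjective f}
  id X := ⟨id, Function.surjective_id⟩
  comp f g := ⟨g.1 ∘ f.1, g.2.comp f.2⟩

/-- Surjections from `X` onto a type `A`. -/
def SurjTo (X : GammaMinus) (A : Type) : Type := {f : X.carrier → A // Function.Surjective f}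

variable (k : Type) [Field k]

/-- The functor `P i = s₂^{⊗i} : Γ₋ᵒᵖ → Vect_k`: the `i`-th pointwise tensor power of the
functor `s₂ : X ↦ k[Surj(X, {0,1})]`, realized via its canonical basis as the free module on
`i`-tuples of surjections `X ↠ {0,1}` (for `i = 0` this is the constant functor
`s₁ = k`, free on the empty tuple). -/
def Pfun (i : ℕ) : GammaMinusᵒᵖ ⥤ ModuleCat.{0} k where
  obj X := ModuleCat.of k ((Fin i → SurjTo X.unop Bool) →₀ k)
  map {X Y} g := ModuleCat.ofHom (Finsupp.lmapDomain k k
    (fun t (j : Fin i) => (⟨(t j).1 ∘ g.unop.1, (t j).2.comp g.unop.2⟩ : SurjTo Y.unop Bool)))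
  map_id X := by
    apply ModuleCat.hom_ext
    apply Finsupp.lhom_ext
    intro t b
    show Finsupp.mapDomain _ (Finsupp.single t b) = Finsupp.single t b
    erw [Finsupp.mapDomain_single]
    rfl
  map_comp {X Y Z} f g := by
    apply ModuleCat.hom_ext
    apply Finsupp.lhom_ext
    intro t b
    show Finsupp.mapDomain _ (Finsupp.single t b) = _
    erw [Finsupp.mapDomain_single]
    show _ = Finsupp.mapDomain _ (Finsupp.mapDomain _ (Finsupp.single t b))
    erw [Finsupp.mapDomain_single, Finsupp.mapDomain_single]
    rfl

/-- The differential `d_{i+1} = Σ_j (-1)^j id^{⊗(j-1)} ⊗ η ⊗ id^{⊗(i+1-j)} : P_{i+1} → P_i`,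
where `η : s₂ → s₁` sends each basis surjection to `1 ∈ k`. -/
def dAux (i : ℕ) (X : GammaMinus) :
    ((Fin (i + 1) → SurjTo X Bool) →₀ k) →ₗ[k] ((Fin i → SurjTo X Bool) →₀ k) :=
  Finsupp.lift _ k _
    (fun t => ∑ j : Fin (i + 1), ((-1 : k) ^ ((j : ℕ) + 1)) •
      Finsupp.single (fun l => t (j.succAbove l)) (1 : k))

/-- The differential, as a natural transformation `P (i+1) ⟶ P i`. -/
def dNat (i : ℕ) : Pfun k (i + 1) ⟶ Pfun k i where
  app X := ModuleCat.ofHom (dAux k i X.unop)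
  naturality {X Y} g := by
    apply ModuleCat.hom_ext
    apply Finsupp.lhom_ext
    intro t b
    show dAux k i Y.unop (Finsupp.mapDomain _ (Finsupp.single t b)) =
      Finsupp.mapDomain _ (dAux k i X.unop (Finsupp.single t b))
    erw [Finsupp.mapDomain_single]
    show (Finsupp.lift _ k _ _) (Finsupp.single _ b) =
      Finsupp.mapDomain _ ((Finsupp.lift _ k _ _) (Finsupp.single t b))
    erw [Finsupp.lift_apply, Finsupp.lift_apply, Finsupp.sum_single_index (by simp),
      Finsupp.sum_single_index (by simp)]
    simp only [Finsupp.mapDomain_smul, Finsupp.mapDomain_finset_sum, Finsupp.mapDomain_single]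
    erw [Finsupp.mapDomain_smul, Finsupp.mapDomain_finsetSum]
    congr 1
    refine Finset.sum_congr rfl fun j _ => ?_
    erw [Finsupp.mapDomain_smul, Finsupp.mapDomain_single]

/-- The functor `t₁ : Γ₋ᵒᵖ → Vect_k` with `t₁(X) = k` for `X` a singleton and `t₁(X) = 0`
otherwise. -/
def t1Sub (X : GammaMinus) : Submodule k k where
  carrier := {c | ¬ Subsingleton X.carrier → c = 0}
  add_mem' := fun {a b} ha hb h => by rw [ha h, hb h, add_zero]
  zero_mem' := fun _ => rfl
  smul_mem' := fun c {x} hx h => by rw [hx h, smul_zero]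

open scoped Classical in
/-- The linear map `t₁(A) → t₁(B)` (the identity of `k` if `B` is a singleton, zero
otherwise). -/
def t1Map (A B : GammaMinus) : t1Sub k A →ₗ[k] t1Sub k B where
  toFun c := ⟨if Subsingleton B.carrier then (c : k) else 0, fun h => if_neg h⟩
  map_add' a b := Subtype.ext (by
    dsimp only
    split_ifs with h
    · rfl
    · simp)
  map_smul' c a := Subtype.ext (by
    dsimp only
    split_ifs with h
    · rfl
    · simp)

open scoped Classical in
/-- The functor `t₁`. -/
def t1 : GammaMinusᵒᵖ ⥤ ModuleCat.{0} k where
  obj X := ModuleCat.of k (t1Sub k X.unop)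
  map {X Y} g := ModuleCat.ofHom (t1Map k X.unop Y.unop)
  map_id X := by
    apply ModuleCat.hom_ext
    apply LinearMap.ext
    rintro ⟨c, hc⟩
    apply Subtype.ext
    show (if Subsingleton X.unop.carrier then c else 0) = c
    split_ifs with h
    · rfl
    · exact (hc h).symm
  map_comp {X Y Z} f g := by
    apply ModuleCat.hom_ext
    apply LinearMap.ext
    rintro ⟨c, hc⟩
    apply Subtype.ext
    show (if Subsingleton Z.unop.carrier then c else 0) =
      (if Subsingleton Z.unop.carrier
        then (if Subsingleton Y.unop.carrier then c else 0) else 0)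
    by_cases h : Subsingleton Z.unop.carrier
    · have hY : Subsingleton Y.unop.carrier := by
        have hs := g.unop.2
        exact hs.subsingleton
      rw [if_pos h, if_pos h, if_pos hY]
    · rw [if_neg h, if_neg h]


namespace Stmt9

lemma succAbove_val {n : ℕ} (p : Fin (n + 1)) (i : Fin n) :
    ((p.succAbove i : Fin (n + 1)) : ℕ) = if (i : ℕ) < (p : ℕ) then (i : ℕ) else (i : ℕ) + 1 := by
  simp only [Fin.succAbove]
  split_ifs with h1 h2 h2
  · rfl
  · exact absurd h1 (by simpa [Fin.lt_def] using h2)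
  · exact absurd (by simpa [Fin.lt_def] using h2) h1
  · rfl

lemma succAbove_succAbove {N : ℕ} (j : Fin (N + 2)) (l : Fin (N + 1))
    (h : (l.castSucc : Fin (N + 2)) < j) (m : Fin N) :
    j.succAbove (l.succAbove m) =
      (l.castSucc : Fin (N + 2)).succAbove
        ((j.pred (Fin.pos_iff_ne_zero.mp (lt_of_le_of_lt (Fin.zero_le _) h))).succAbove m) := by
  have h' : (l : ℕ) < (j : ℕ) := h
  apply Fin.ext
  rw [succAbove_val, succAbove_val, succAbove_val, succAbove_val]
  simp only [Fin.coe_castSucc, Fin.coe_pred]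
  split_ifs <;> omega

variable (k : Type) [Field k]

lemma dAux_single (i : ℕ) (X : GammaMinus) (t : Fin (i + 1) → SurjTo X Bool) :
    dAux k i X (Finsupp.single t 1) =
      ∑ j : Fin (i + 1), ((-1 : k) ^ ((j : ℕ) + 1)) •
        Finsupp.single (fun l => t (j.succAbove l)) (1 : k) := by
  rw [dAux, Finsupp.lift_apply, Finsupp.sum_single_index (by simp), one_smul]

lemma dd_zero (i : ℕ) (X : GammaMinus) :
    (dAux k i X).comp (dAux k (i + 1) X) = 0 := by
  apply Finsupp.lhom_ext
  intro t b
  suffices h1 : (dAux k i X) ((dAux k (i + 1) X) (Finsupp.single t 1)) = 0 by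
    have : Finsupp.single t b = b • Finsupp.single t 1 := by
      rw [Finsupp.smul_single, smul_eq_mul, mul_one]
    rw [LinearMap.comp_apply, this, map_smul, map_smul, h1, smul_zero]
    rfl
  rw [dAux_single, map_sum]
  simp only [map_smul, dAux_single, Finset.smul_sum, smul_smul]
  rw [← Finset.sum_product']
  set f : Fin (i + 2) × Fin (i + 1) → ((Fin i → SurjTo X Bool) →₀ k) :=
    fun p => ((-1 : k) ^ ((p.1 : ℕ) + 1) * (-1 : k) ^ ((p.2 : ℕ) + 1)) •
      Finsupp.single (fun m => t (p.1.succAbove (p.2.succAbove m))) (1 : k) with hf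
  show ∑ p ∈ Finset.univ ×ˢ Finset.univ, f p = 0
  have key : ∀ (j : Fin (i + 2)) (l : Fin (i + 1)) (h : (l.castSucc : Fin (i + 2)) < j),
      f (j, l) + f (l.castSucc, j.pred (Fin.pos_iff_ne_zero.mp
        (lt_of_le_of_lt (Fin.zero_le _) h))) = 0 := by
    intro j l h
    have h' : (l : ℕ) < (j : ℕ) := h
    have hj0 : (j : ℕ) ≠ 0 := by omega
    have hfun : (fun m => t (j.succAbove (l.succAbove m))) =
        (fun m => t ((l.castSucc : Fin (i + 2)).succAbove
          ((j.pred (Fin.pos_iff_ne_zero.mp (lt_of_le_of_lt (Fin.zero_le _) h))).succAbove m))) := by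
      funext m
      rw [succAbove_succAbove j l h m]
    simp only [hf, hfun]
    rw [← add_smul]
    convert zero_smul k _
    have : ((l.castSucc : Fin (i + 2)) : ℕ) = (l : ℕ) := rfl
    have hpred : ((j.pred (Fin.pos_iff_ne_zero.mp (lt_of_le_of_lt (Fin.zero_le _) h))) : ℕ)
        = (j : ℕ) - 1 := rfl
    rw [this, hpred]
    have hexp : (l : ℕ) + 1 + ((j : ℕ) - 1 + 1) = ((j : ℕ) + 1) + ((l : ℕ) + 1) - 1 := by omega
    rw [← pow_add, ← pow_add, hexp]
    obtain ⟨n, hn⟩ : ∃ n, ((j : ℕ) + 1) + ((l : ℕ) + 1) = n + 1 := ⟨(j : ℕ) + (l : ℕ) + 1, by omega⟩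
    rw [hn]
    simp [pow_succ]
  classical
  set g : Fin (i + 2) × Fin (i + 1) → Fin (i + 2) × Fin (i + 1) :=
    fun p => if h : ((p.2.castSucc : Fin (i + 2)) < p.1)
      then (p.2.castSucc, p.1.pred (Fin.pos_iff_ne_zero.mp (lt_of_le_of_lt (Fin.zero_le _) h)))
      else (p.2.succ, p.1.castLT (by
        have : (p.1 : ℕ) ≤ (p.2 : ℕ) := not_lt.mp h
        omega)) with hg
  apply Finset.sum_ninvolution g
  · -- f a + f (g a) = 0
    rintro ⟨j, l⟩
    by_cases h : ((l.castSucc : Fin (i + 2)) < j)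
    · rw [hg]; simp only [dif_pos h]
      exact key j l h
    · rw [hg]; simp only [dif_neg h]
      have h' : (j : ℕ) ≤ (l : ℕ) := not_lt.mp h
      have hcond : (((j.castLT (by omega : (j : ℕ) < i + 1)).castSucc : Fin (i + 2))
          < l.succ) := by
        simp only [Fin.lt_def, Fin.coe_castSucc, Fin.val_succ, Fin.coe_castLT]
        omega
      have := key l.succ (j.castLT (by omega : (j : ℕ) < i + 1)) hcond
      simp only [Fin.castSucc_castLT, Fin.pred_succ] at this
      rw [add_comm]
      exact this
  · -- g a ≠ a when f a ≠ 0
    rintro ⟨j, l⟩ _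
    rw [hg]
    by_cases h : ((l.castSucc : Fin (i + 2)) < j)
    · simp only [dif_pos h]
      intro hEq
      have := congrArg Prod.fst hEq
      simp only at this
      exact absurd this (Fin.ne_of_lt h)
    · simp only [dif_neg h]
      intro hEq
      rw [Prod.mk.injEq] at hEq
      have h1 := congrArg Fin.val hEq.1
      have h' : (j : ℕ) ≤ (l : ℕ) := not_lt.mp h
      simp only [Fin.val_succ] at h1
      omega
  · intro a; exact Finset.mem_product.mpr ⟨Finset.mem_univ _, Finset.mem_univ _⟩
  · -- g (g a) = a
    rintro ⟨j, l⟩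
    rw [hg]
    by_cases h : ((l.castSucc : Fin (i + 2)) < j)
    · simp only [dif_pos h]
      have h' : (l : ℕ) < (j : ℕ) := h
      have hcond : ¬ (((j.pred (Fin.pos_iff_ne_zero.mp
          (lt_of_le_of_lt (Fin.zero_le _) h))).castSucc : Fin (i + 2)) < l.castSucc) := by
        simp only [Fin.lt_def, Fin.coe_castSucc, Fin.coe_pred]
        omega
      simp only [dif_neg hcond]
      refine Prod.ext ?_ ?_
      · exact Fin.ext (by
          simp only [Fin.val_succ, Fin.coe_pred]
          omega)
      · exact Fin.ext rfl
    · simp only [dif_neg h]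
      have h' : (j : ℕ) ≤ (l : ℕ) := not_lt.mp h
      have hcond : (((j.castLT (by omega : (j : ℕ) < i + 1)).castSucc : Fin (i + 2))
          < l.succ) := by
        simp only [Fin.lt_def, Fin.coe_castSucc, Fin.val_succ, Fin.coe_castLT]
        omega
      simp only [dif_pos hcond]
      refine Prod.ext ?_ ?_
      · exact Fin.ext rfl
      · exact Fin.ext (by simp only [Fin.coe_pred, Fin.val_succ, Fin.coe_castLT]; omega)

lemma dAux_single' (i : ℕ) (X : GammaMinus) (t : Fin (i + 1) → SurjTo X Bool) (b : k) :
    dAux k i X (Finsupp.single t b) =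
      b • ∑ j : Fin (i + 1), ((-1 : k) ^ ((j : ℕ) + 1)) •
        Finsupp.single (fun l => t (j.succAbove l)) (1 : k) := by
  have : Finsupp.single t b = b • Finsupp.single t 1 := by
    rw [Finsupp.smul_single, smul_eq_mul, mul_one]
  rw [this, map_smul, dAux_single]

/-- The contracting homotopy `x ↦ s₀ ⊗ x`. -/
def consMap (i : ℕ) (X : GammaMinus) (s0 : SurjTo X Bool) :
    ((Fin i → SurjTo X Bool) →₀ k) →ₗ[k] ((Fin (i + 1) → SurjTo X Bool) →₀ k) :=
  Finsupp.lmapDomain k k (fun t => Fin.cons s0 t)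

lemma d_consMap (i : ℕ) (X : GammaMinus) (s0 : SurjTo X Bool) :
    (dAux k (i + 1) X).comp (consMap k (i + 1) X s0) =
      -LinearMap.id - (consMap k i X s0).comp (dAux k i X) := by
  apply Finsupp.lhom_ext
  intro t b
  have hcons : ∀ j' : Fin (i + 1),
      (fun l => (Fin.cons s0 t : Fin (i + 2) → SurjTo X Bool) ((j'.succ).succAbove l)) =
        (Fin.cons s0 (fun m => t (j'.succAbove m)) : Fin (i + 1) → SurjTo X Bool) := by
    intro j'
    funext l
    induction l using Fin.cases with
    | zero => rw [Fin.succ_succAbove_zero, Fin.cons_zero, Fin.cons_zero]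
    | succ m => rw [Fin.succ_succAbove_succ, Fin.cons_succ, Fin.cons_succ]
  show dAux k (i + 1) X (Finsupp.mapDomain _ (Finsupp.single t b)) = _
  rw [Finsupp.mapDomain_single, dAux_single']
  rw [Fin.sum_univ_succ]
  have h0 : (fun l => (Fin.cons s0 t : Fin (i + 2) → SurjTo X Bool)
      ((0 : Fin (i + 2)).succAbove l)) = t := by
    funext l
    rw [Fin.zero_succAbove, Fin.cons_succ]
  rw [h0]
  simp only [Fin.val_zero, pow_one, hcons, Fin.val_succ]
  rw [smul_add]
  rw [LinearMap.sub_apply, LinearMap.neg_apply, LinearMap.id_apply, LinearMap.comp_apply,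
    dAux_single']
  show _ = _ - (consMap k i X s0) _
  rw [map_smul, map_sum]
  simp only [map_smul]
  have hmd : ∀ j' : Fin (i + 1),
      (consMap k i X s0) (Finsupp.single (fun m => t (j'.succAbove m)) (1 : k)) =
        Finsupp.single (Fin.cons s0 (fun m => t (j'.succAbove m))) (1 : k) := by
    intro j'
    show Finsupp.mapDomain _ _ = _
    rw [Finsupp.mapDomain_single]
  simp only [hmd]
  have hsign : ∀ j' : Fin (i + 1), ((-1 : k) ^ ((j' : ℕ) + 1 + 1)) = -((-1 : k) ^ ((j' : ℕ) + 1)) := by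
    intro j'
    rw [pow_succ]
    ring
  simp only [hsign]
  rw [Finset.smul_sum, Finset.smul_sum]
  rw [sub_eq_add_neg, ← Finset.sum_neg_distrib]
  congr 1
  · rw [pow_one]
    simp [Finsupp.smul_single]
  · apply Finset.sum_congr rfl
    intro j' _
    rw [neg_smul, smul_neg]

lemma exact_mid (i : ℕ) (X : GammaMinus) (x : (Fin (i + 1) → SurjTo X Bool) →₀ k)
    (hx : dAux k i X x = 0) : ∃ y, dAux k (i + 1) X y = x := by
  by_cases hS : Nonempty (SurjTo X Bool)
  · obtain ⟨s0⟩ := hS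
    refine ⟨-(consMap k (i + 1) X s0 x), ?_⟩
    have := congrArg (fun L : ((Fin (i + 1) → SurjTo X Bool) →₀ k) →ₗ[k]
        ((Fin (i + 1) → SurjTo X Bool) →₀ k) => L x) (d_consMap k i X s0)
    simp only [LinearMap.comp_apply, LinearMap.sub_apply, LinearMap.neg_apply,
      LinearMap.id_apply, hx, map_zero, sub_zero] at this
    rw [map_neg, this, neg_neg]
  · have hx0 : x = 0 := by
      ext t
      exact absurd ⟨t 0⟩ hS
    exact ⟨0, by rw [map_zero, hx0]⟩

open scoped Classical

lemma not_subsingleton_of_surj (X : GammaMinus) (s : SurjTo X Bool) :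
    ¬ Subsingleton X.carrier := by
  intro hsub
  obtain ⟨x, hx⟩ := s.2 true
  obtain ⟨y, hy⟩ := s.2 false
  rw [hsub.elim x y, hy] at hx
  exact Bool.false_ne_true hx

lemma surjTo_nonempty_of_not_subsingleton (X : GammaMinus) (h : ¬ Subsingleton X.carrier) :
    Nonempty (SurjTo X Bool) := by
  rw [not_subsingleton_iff_nontrivial] at h
  obtain ⟨a, b, hab⟩ := h
  refine ⟨⟨fun z => if z = a then true else false, ?_⟩⟩
  intro c
  cases c
  · exact ⟨b, if_neg (fun h => hab h.symm)⟩
  · exact ⟨a, if_pos rfl⟩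

/-- The augmentation at an object. -/
def phiAux (X : GammaMinus) : ((Fin 0 → SurjTo X Bool) →₀ k) →ₗ[k] t1Sub k X :=
  Finsupp.lift _ k _
    (fun _ => (⟨if Subsingleton X.carrier then 1 else 0, fun h => if_neg h⟩ : t1Sub k X))

lemma phiAux_single (X : GammaMinus) (t : Fin 0 → SurjTo X Bool) (b : k) :
    phiAux k X (Finsupp.single t b) =
      b • (⟨if Subsingleton X.carrier then 1 else 0, fun h => if_neg h⟩ : t1Sub k X) := by
  rw [phiAux, Finsupp.lift_apply, Finsupp.sum_single_index (by simp)]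

lemma phiAux_surjective (X : GammaMinus) : Function.Surjective (phiAux k X) := by
  rintro ⟨c, hc⟩
  by_cases h : Subsingleton X.carrier
  · refine ⟨Finsupp.single (fun x => x.elim0) c, ?_⟩
    rw [phiAux_single]
    apply Subtype.ext
    show c • (if Subsingleton X.carrier then (1 : k) else 0) = c
    rw [if_pos h, smul_eq_mul, mul_one]
  · refine ⟨0, ?_⟩
    rw [map_zero]
    exact (Subtype.ext (hc h)).symm

lemma phiAux_comp_d (X : GammaMinus) : (phiAux k X).comp (dAux k 0 X) = 0 := by
  apply Finsupp.lhom_ext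
  intro t b
  rw [LinearMap.comp_apply, dAux_single', map_smul, map_sum]
  have : ∀ j : Fin 1, phiAux k X (((-1 : k) ^ ((j : ℕ) + 1)) •
      Finsupp.single (fun l => t (j.succAbove l)) (1 : k)) = 0 := by
    intro j
    rw [map_smul, phiAux_single, one_smul]
    apply smul_eq_zero_of_right
    apply Subtype.ext
    show (if Subsingleton X.carrier then (1:k) else 0) = 0
    rw [if_neg (not_subsingleton_of_surj X (t 0))]
  simp only [this, Finset.sum_const_zero, smul_zero]
  rfl

lemma exact_deg0 (X : GammaMinus) (x : (Fin 0 → SurjTo X Bool) →₀ k)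
    (hx : phiAux k X x = 0) : ∃ y, dAux k 0 X y = x := by
  have hu : x = Finsupp.single (fun l : Fin 0 => l.elim0) (x (fun l => l.elim0)) := by
    refine Finsupp.ext fun t => ?_
    have ht : t = fun l : Fin 0 => l.elim0 := funext (fun l => l.elim0)
    subst ht
    rw [Finsupp.single_eq_same]
  set c := x (fun l : Fin 0 => l.elim0) with hc
  rw [hu, phiAux_single] at hx
  by_cases h : Subsingleton X.carrier
  · have hc0 : c = 0 := by
      have := congrArg Subtype.val hx
      simpa [if_pos h] using this
    exact ⟨0, by rw [map_zero, hu, hc0, Finsupp.single_zero]⟩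
  · obtain ⟨s⟩ := surjTo_nonempty_of_not_subsingleton X h
    refine ⟨Finsupp.single (fun _ : Fin 1 => s) (-c), ?_⟩
    rw [dAux_single']
    rw [hu]
    rw [Fin.sum_univ_one]
    have : (fun l : Fin 0 => (fun _ : Fin 1 => s) ((0 : Fin 1).succAbove l)) =
        (fun l : Fin 0 => l.elim0) := funext (fun l => l.elim0)
    rw [this]
    rw [Fin.val_zero, pow_one]
    simp [Finsupp.smul_single]

/-- The augmentation `P₀ ⟶ t₁`. -/
def phi : Pfun k 0 ⟶ t1 k where
  app X := ModuleCat.ofHom (phiAux k X.unop)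
  naturality {X Y} g := by
    apply ModuleCat.hom_ext
    apply Finsupp.lhom_ext
    intro t b
    show phiAux k Y.unop (Finsupp.mapDomain _ (Finsupp.single t b)) =
      t1Map k X.unop Y.unop (phiAux k X.unop (Finsupp.single t b))
    erw [Finsupp.mapDomain_single]
    erw [phiAux_single, phiAux_single, map_smul]
    congr 1
    apply Subtype.ext
    show (if Subsingleton Y.unop.carrier then (1:k) else 0) =
      (if Subsingleton Y.unop.carrier
        then (if Subsingleton X.unop.carrier then (1:k) else 0) else 0)
    by_cases h : Subsingleton Y.unop.carrier
    · have hX : Subsingleton X.unop.carrier := by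
        have hs := g.unop.2
        exact hs.subsingleton
      rw [if_pos h, if_pos h, if_pos hX]
    · rw [if_neg h, if_neg h]

lemma hzero (i : ℕ) : dNat k (i + 1) ≫ dNat k i = 0 := by
  apply NatTrans.ext
  funext X
  show ModuleCat.ofHom ((dAux k i X.unop).comp (dAux k (i + 1) X.unop)) = 0
  rw [dd_zero]
  rfl

lemma d_comp_phi : dNat k 0 ≫ phi k = 0 := by
  apply NatTrans.ext
  funext X
  show ModuleCat.ofHom ((phiAux k X.unop).comp (dAux k 0 X.unop)) = 0
  rw [phiAux_comp_d]
  rfl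

lemma exact_of_pointwise (S : ShortComplex (GammaMinusᵒᵖ ⥤ ModuleCat.{0} k))
    (h : ∀ X : GammaMinusᵒᵖ,
      (S.map ((evaluation GammaMinusᵒᵖ (ModuleCat.{0} k)).obj X)).Exact) : S.Exact := by
  rw [S.exact_iff_isZero_homology, Functor.isZero_iff]
  intro X
  have h2 := ((S.map ((evaluation GammaMinusᵒᵖ (ModuleCat.{0} k)).obj X)).exact_iff_isZero_homology).mp (h X)
  exact IsZero.of_iso h2 (S.mapHomologyIso ((evaluation GammaMinusᵒᵖ (ModuleCat.{0} k)).obj X)).symm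

lemma exact_positive (i : ℕ) :
    (ShortComplex.mk (dNat k (i + 1)) (dNat k i) (hzero k i)).Exact := by
  apply exact_of_pointwise
  intro X
  rw [ShortComplex.moduleCat_exact_iff]
  intro x hx
  exact exact_mid k i X.unop x hx

lemma exact_aug :
    (ShortComplex.mk (dNat k 0) (phi k) (d_comp_phi k)).Exact := by
  apply exact_of_pointwise
  intro X
  rw [ShortComplex.moduleCat_exact_iff]
  intro x hx
  exact exact_deg0 k X.unop x hx

instance : Epi (phi k) := by
  rw [NatTrans.epi_iff_epi_app]
  intro X
  rw [ModuleCat.epi_iff_surjective]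
  exact phiAux_surjective k X.unop

/-- Cokernel identification. -/
def cokernelIso : cokernel (dNat k 0) ≅ t1 k :=
  IsColimit.coconePointUniqueUpToIso (cokernelIsCokernel (dNat k 0))
    ((exact_aug k).gIsCokernel)

section Proj

/-- An object of `Γ₋` built from a nonempty set of functions. -/
def mkObj {i : ℕ} (S : Set (Fin i → Bool)) (hne : S.Nonempty) : GammaMinus :=
  @GammaMinus.mk (↥S) hne.to_subtype inferInstance

/-- Each coordinate of `S` takes both values. -/
def Coord (i : ℕ) (S : Set (Fin i → Bool)) : Prop :=
  ∀ (j : Fin i) (b : Bool), ∃ v ∈ S, v j = b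

/-- The canonical tuple of surjections on `mkObj S`. -/
def canTup {i : ℕ} (S : Set (Fin i → Bool)) (hne : S.Nonempty) (hc : Coord i S) :
    Fin i → SurjTo (mkObj S hne) Bool :=
  fun j => ⟨fun v => Subtype.val (v : ↥S) j, fun b => by
    obtain ⟨v, hv, hvb⟩ := hc j b
    exact ⟨⟨v, hv⟩, hvb⟩⟩

/-- The set of values of a tuple of surjections. -/
def rangeSet {i : ℕ} {X : GammaMinus} (t : Fin i → SurjTo X Bool) : Set (Fin i → Bool) :=
  Set.range (fun (a : X.carrier) (j : Fin i) => (t j).1 a)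

lemma rangeSet_nonempty {i : ℕ} {X : GammaMinus} (t : Fin i → SurjTo X Bool) :
    (rangeSet t).Nonempty := by
  obtain ⟨a⟩ := X.nonempty
  exact ⟨_, ⟨a, rfl⟩⟩

lemma rangeSet_coord {i : ℕ} {X : GammaMinus} (t : Fin i → SurjTo X Bool) :
    Coord i (rangeSet t) := by
  intro j b
  obtain ⟨a, ha⟩ := (t j).2 b
  exact ⟨fun j' => (t j').1 a, ⟨a, rfl⟩, ha⟩

/-- The canonical surjection from `X` onto the range of a tuple. -/
def piT {i : ℕ} {X : GammaMinus} (t : Fin i → SurjTo X Bool) :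
    X ⟶ mkObj (rangeSet t) (rangeSet_nonempty t) := by
  refine ⟨fun a => ⟨fun j => (t j).1 a, ⟨a, rfl⟩⟩, ?_⟩
  rintro ⟨v, a, rfl⟩
  exact ⟨a, rfl⟩

variable {F G : GammaMinusᵒᵖ ⥤ ModuleCat.{0} k} (e : F ⟶ G) (i : ℕ) (f : Pfun k i ⟶ G)
  (hs : ∀ Z, Function.Surjective (e.app Z))

/-- A choice of preimage of the image of the canonical basis element. -/
def liftElem (S : Set (Fin i → Bool)) (hne : S.Nonempty) (hc : Coord i S) :
    F.obj (Opposite.op (mkObj S hne)) :=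
  Classical.choose (hs (Opposite.op (mkObj S hne))
    (f.app (Opposite.op (mkObj S hne)) (Finsupp.single (canTup S hne hc) 1)))

lemma liftElem_spec (S : Set (Fin i → Bool)) (hne : S.Nonempty) (hc : Coord i S) :
    e.app (Opposite.op (mkObj S hne)) (liftElem k e i f hs S hne hc) =
      f.app (Opposite.op (mkObj S hne)) (Finsupp.single (canTup S hne hc) 1) :=
  Classical.choose_spec (hs (Opposite.op (mkObj S hne))
    (f.app (Opposite.op (mkObj S hne)) (Finsupp.single (canTup S hne hc) 1)))

lemma map_liftElem_congr {S S' : Set (Fin i → Bool)} (hSS : S = S')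
    (hne : S.Nonempty) (hc : Coord i S) (hne' : S'.Nonempty) (hc' : Coord i S')
    {X : GammaMinus} (q : X ⟶ mkObj S hne) (q' : X ⟶ mkObj S' hne')
    (hq : ∀ a, Subtype.val (q.1 a : ↥S) = Subtype.val (q'.1 a : ↥S')) :
    F.map q.op (liftElem k e i f hs S hne hc) =
      F.map q'.op (liftElem k e i f hs S' hne' hc') := by
  subst hSS
  have hqq : q = q' := Subtype.ext (funext fun a => Subtype.ext (hq a))
  subst hqq
  rfl

/-- The lifted natural transformation. -/
def liftNat : Pfun k i ⟶ F where
  app X := ModuleCat.ofHom (Finsupp.lift (F.obj X) k (Fin i → SurjTo X.unop Bool)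
    (fun t => F.map (piT t).op
      (liftElem k e i f hs (rangeSet t) (rangeSet_nonempty t) (rangeSet_coord t))))
  naturality {X Y} g := by
    apply ModuleCat.hom_ext
    apply Finsupp.lhom_ext
    intro t b
    set t' : Fin i → SurjTo Y.unop Bool :=
      fun j => (⟨(t j).1 ∘ g.unop.1, (t j).2.comp g.unop.2⟩ : SurjTo Y.unop Bool) with ht'
    show (Finsupp.lift (F.obj Y) k _ _) (Finsupp.mapDomain _ (Finsupp.single t b)) =
      F.map g ((Finsupp.lift (F.obj X) k _ _) (Finsupp.single t b))
    erw [Finsupp.mapDomain_single]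
    erw [Finsupp.lift_apply, Finsupp.lift_apply,
      Finsupp.sum_single_index (by simp), Finsupp.sum_single_index (by simp),
      map_smul]
    congr 1
    have hrange : rangeSet t' = rangeSet t := by
      have h1 : rangeSet t' = Set.range
          ((fun (a : X.unop.carrier) (j : Fin i) => (t j).1 a) ∘ g.unop.1) := rfl
      rw [h1, Function.Surjective.range_comp g.unop.2]
      rfl
    have hcomp : F.map (piT t).op ≫ F.map g = F.map ((g.unop ≫ piT t).op) := by
      rw [← F.map_comp]
      rfl
    show F.map (piT t').op _ = F.map g (F.map (piT t).op _)
    have := congrArg (fun (L : F.obj (Opposite.op (mkObj (rangeSet t) (rangeSet_nonempty t)))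
        ⟶ F.obj Y) => L (liftElem k e i f hs (rangeSet t) (rangeSet_nonempty t)
          (rangeSet_coord t))) hcomp
    dsimp only at this
    rw [show F.map g (F.map (piT t).op (liftElem k e i f hs (rangeSet t)
        (rangeSet_nonempty t) (rangeSet_coord t))) = F.map ((g.unop ≫ piT t).op)
        (liftElem k e i f hs (rangeSet t) (rangeSet_nonempty t) (rangeSet_coord t)) from this]
    exact map_liftElem_congr k e i f hs hrange _ _ _ _ (piT t') (g.unop ≫ piT t)
      (fun a => rfl)

lemma liftNat_fac : liftNat k e i f hs ≫ e = f := by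
  apply NatTrans.ext
  funext X
  apply ModuleCat.hom_ext
  apply Finsupp.lhom_ext
  intro t b
  show e.app X ((Finsupp.lift (F.obj X) k _ _) (Finsupp.single t b)) =
    f.app X (Finsupp.single t b)
  rw [Finsupp.lift_apply, Finsupp.sum_single_index (by simp), map_smul]
  have hnat := congrArg (fun (L : F.obj (Opposite.op (mkObj (rangeSet t)
      (rangeSet_nonempty t))) ⟶ G.obj X) => L (liftElem k e i f hs (rangeSet t)
        (rangeSet_nonempty t) (rangeSet_coord t))) (e.naturality (piT t).op)
  dsimp only at hnat
  show b • (e.app X) ((F.map (piT t).op) _) = _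
  rw [show (e.app X) ((F.map (piT t).op) (liftElem k e i f hs (rangeSet t)
      (rangeSet_nonempty t) (rangeSet_coord t))) = (G.map (piT t).op) ((e.app _)
        (liftElem k e i f hs (rangeSet t) (rangeSet_nonempty t) (rangeSet_coord t))) from hnat,
    liftElem_spec]
  have hnat2 := congrArg (fun (L : (Pfun k i).obj (Opposite.op (mkObj (rangeSet t)
      (rangeSet_nonempty t))) ⟶ G.obj X) => L (Finsupp.single (canTup (rangeSet t)
        (rangeSet_nonempty t) (rangeSet_coord t)) 1)) (f.naturality (piT t).op)
  dsimp only at hnat2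
  rw [show (G.map (piT t).op) ((f.app _) (Finsupp.single (canTup (rangeSet t)
      (rangeSet_nonempty t) (rangeSet_coord t)) 1)) = (f.app X) (((Pfun k i).map (piT t).op)
        (Finsupp.single (canTup (rangeSet t) (rangeSet_nonempty t) (rangeSet_coord t)) 1))
      from hnat2.symm]
  show b • (f.app X) (Finsupp.mapDomain _ _) = _
  erw [Finsupp.mapDomain_single]
  have hback : (fun (j : Fin i) => (⟨(canTup (rangeSet t) (rangeSet_nonempty t)
      (rangeSet_coord t) j).1 ∘ ((piT t).op.unop).1,
        ((canTup (rangeSet t) (rangeSet_nonempty t) (rangeSet_coord t) j).2).comp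
          ((piT t).op.unop).2⟩ : SurjTo X.unop Bool)) = t := by
    funext j
    apply Subtype.ext
    rfl
  erw [hback, ← map_smul]
  congr 1
  erw [Finsupp.smul_single, smul_eq_mul, mul_one]

lemma projective_Pfun (i : ℕ) : Projective (Pfun k i) := by
  constructor
  intro E Y f e he
  have hs : ∀ Z, Function.Surjective (e.app Z) := by
    intro Z
    rw [← ModuleCat.epi_iff_surjective]
    infer_instance
  exact ⟨liftNat k e i f hs, liftNat_fac k e i f hs⟩

end Proj

end Stmt9

/-- In `A = Fun(Γ₋ᵒᵖ, Vect_k)`, the complex `(P_•, d)` with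
`P_i = s₂^{⊗i}` and the alternating-sum differential is a projective resolution of `t₁`:
`d ∘ d = 0`, each `P_i` is projective, the cokernel of `d₁ : P₁ → P₀` is isomorphic to
`t₁`, and the complex is exact in positive degrees. -/
theorem stmt_9 (k : Type) [Field k] :
    ∃ hzero : ∀ i : ℕ, dNat k (i + 1) ≫ dNat k i = 0,
      (∀ i : ℕ, Projective (Pfun k i)) ∧
      Nonempty (cokernel (dNat k 0) ≅ t1 k) ∧
      (∀ i : ℕ, (ShortComplex.mk (dNat k (i + 1)) (dNat k i) (hzero i)).Exact) := by
  exact ⟨Stmt9.hzero k, fun i => Stmt9.projective_Pfun k i, ⟨Stmt9.cokernelIso k⟩,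
    fun i => Stmt9.exact_positive k i⟩

end
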